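/- Let G be a group and S ⊆ G with 1 ∉ S. Then the two-sided ideal of B generated by {e_s : s ∈ S} is a proper ideal of B. -/

import Mathlib

/-- The defining relations of Exel's semigroup `S(G)` of a group `G`:
`[1] = 1`, `[s⁻¹][s][t] = [s⁻¹][st]`, `[s][t][t⁻¹] = [st][t⁻¹]`. -/
inductive ExelRel (G : Type*) [Group G] : FreeMonoid G → FreeMonoid G → Prop
  | one : ExelRel G (FreeMonoid.of 1) 1
  | left (s t : G) : ExelRel G
      (FreeMonoid.of s⁻¹ * FreeMonoid.of s * FreeMonoid.of t)
      (FreeMonoid.of s⁻¹ * FreeMonoid.of (s * t))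
  | right (s t : G) : ExelRel G
      (FreeMonoid.of s * FreeMonoid.of t * FreeMonoid.of t⁻¹)
      (FreeMonoid.of (s * t) * FreeMonoid.of t⁻¹)

/-- The congruence on the free monoid on `G` generated by the Exel relations. -/
def ExelCon (G : Type*) [Group G] : Con (FreeMonoid G) := conGen (ExelRel G)

/-- Exel's semigroup (an inverse monoid) `S(G)` of the group `G`. -/
abbrev ExelMonoid (G : Type*) [Group G] := (ExelCon G).Quotient

/-- The canonical generator `[g]` of `S(G)`. -/
def ExelMonoid.of {G : Type*} [Group G] (g : G) : ExelMonoid G :=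
  (ExelCon G).mk' (FreeMonoid.of g)

/-- The idempotent `e_g := [g][g⁻¹]` in `S(G)`. -/
def ExelMonoid.e {G : Type*} [Group G] (g : G) : ExelMonoid G :=
  ExelMonoid.of g * ExelMonoid.of g⁻¹

/-- The partial group algebra `K_par G`: the semigroup `K`-algebra of Exel's semigroup. -/
abbrev KparG (K G : Type*) [CommRing K] [Group G] := MonoidAlgebra K (ExelMonoid G)

/-- The canonical generator `[g]` of `K_par G`. -/
noncomputable def pr (K : Type*) {G : Type*} [CommRing K] [Group G] (g : G) : KparG K G :=
  MonoidAlgebra.of K (ExelMonoid G) (ExelMonoid.of g)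

/-- The idempotent `e_g := [g][g⁻¹]` in `K_par G`. -/
noncomputable def eK (K : Type*) {G : Type*} [CommRing K] [Group G] (g : G) : KparG K G :=
  pr K g * pr K g⁻¹

/-- `B`, the subalgebra of `K_par G` generated by the idempotents `e_g`. -/
noncomputable def Bsub (K G : Type*) [CommRing K] [Group G] : Subalgebra K (KparG K G) :=
  Algebra.adjoin K (Set.range fun g : G => eK K g)

theorem eK_mem_Bsub (K : Type*) {G : Type*} [CommRing K] [Group G] (g : G) :
    eK K g ∈ Bsub K G :=
  Algebra.subset_adjoin ⟨g, rfl⟩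

open Classical

noncomputable def deltaFree (K : Type*) (G : Type*) [CommRing K] [Group G] :
    FreeMonoid G →* K :=
  FreeMonoid.lift fun g => if g = 1 then (1 : K) else 0

theorem deltaFree_resp (K : Type*) (G : Type*) [CommRing K] [Group G] :
    ExelCon G ≤ Con.ker (deltaFree K G) := by
  apply Con.conGen_le.mpr
  intro x y h
  cases h with
  | one => simp [Con.ker_rel, deltaFree]
  | left s t =>
      rcases eq_or_ne s 1 with rfl | hs
      · simp [Con.ker_rel, deltaFree]
      · simp [Con.ker_rel, deltaFree, inv_eq_one, hs]
  | right s t =>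
      rcases eq_or_ne t 1 with rfl | ht
      · simp [Con.ker_rel, deltaFree]
      · simp [Con.ker_rel, deltaFree, inv_eq_one, ht]

noncomputable def deltaHom (K : Type*) (G : Type*) [CommRing K] [Group G] :
    ExelMonoid G →* K :=
  Con.lift _ (deltaFree K G) (deltaFree_resp K G)

theorem deltaHom_of (K : Type*) {G : Type*} [CommRing K] [Group G] (g : G) :
    deltaHom K G (ExelMonoid.of g) = if g = 1 then (1 : K) else 0 := by
  simp [deltaHom, ExelMonoid.of, deltaFree]

noncomputable def psi (K : Type*) (G : Type*) [CommRing K] [Group G] :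
    KparG K G →ₐ[K] K :=
  MonoidAlgebra.lift K K (ExelMonoid G) (deltaHom K G)

theorem psi_eK (K : Type*) {G : Type*} [CommRing K] [Group G] {s : G} (hs : s ≠ 1) :
    psi K G (eK K s) = 0 := by
  simp [psi, eK, pr, deltaHom_of, hs]

/-- Let `G` be a group and `S ⊆ G` with `1 ∉ S`. Then the ideal of `B` generated by
`{e_s : s ∈ S}` is a proper ideal of `B`. -/
theorem ideal_of_es_proper (K : Type*) {G : Type*} [CommRing K] [Nontrivial K] [Group G]
    (S : Set G) (hS : (1 : G) ∉ S) :
    Ideal.span ((fun s : G => (⟨eK K s, eK_mem_Bsub K s⟩ : Bsub K G)) '' S) ≠ ⊤ := by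
  intro htop
  set psiB : Bsub K G →ₐ[K] K := (psi K G).comp (Bsub K G).val with hpsiB
  have hker : Ideal.span ((fun s : G => (⟨eK K s, eK_mem_Bsub K s⟩ : Bsub K G)) '' S)
      ≤ RingHom.ker psiB.toRingHom := by
    rw [Ideal.span_le]
    rintro x ⟨s, hsS, rfl⟩
    have hs1 : s ≠ 1 := fun h => hS (h ▸ hsS)
    simp only [SetLike.mem_coe, RingHom.mem_ker]
    show psi K G (eK K s) = 0
    exact psi_eK K hs1
  rw [htop] at hker
  have h1 : (1 : Bsub K G) ∈ RingHom.ker psiB.toRingHom := hker trivial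
  rw [RingHom.mem_ker] at h1
  simp at h1
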